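/- Let ρ, T > 0, κ > 1/2, and for each N set α_N = e^{-ρT/N} and ω_i^{(N)} = ((1-α_N)κ + α_N(α_N(κ-1)/κ)^{N+1-i}) / (κ(κ - α_N(κ-1))) for i = 1, …, N+1. Then the total sum ∑_{i=1}^{N+1} ω_i^{(N)} converges to ρT + 1 as N → ∞. -/

import Mathlib

open Real Filter

theorem omega_total_sum_limit (ρ T κ : ℝ)
    (hρ : 0 < ρ) (hT : 0 < T) (hκ : 1/2 < κ) :
    Tendsto (fun N : ℕ =>
      ∑ i ∈ Finset.Icc 1 (N+1),
        ((1 - Real.exp (-ρ*T/N))*κ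
            + Real.exp (-ρ*T/N)*(Real.exp (-ρ*T/N)*(κ-1)/κ)^(N+1-i))
          / (κ*(κ - Real.exp (-ρ*T/N)*(κ-1))))
      atTop (nhds (ρ*T+1)) := by
  have hκ0 : (0:ℝ) < κ := by linarith
  have hκ0' : κ ≠ 0 := ne_of_gt hκ0
  -- |q| < 1 where q = (κ-1)/κ
  have hq1 : |(κ-1)/κ| < 1 := by
    rw [abs_div, abs_of_pos hκ0, div_lt_one hκ0, abs_lt]
    constructor <;> linarith
  -- exp(-ρT/N) ∈ (0,1]
  have hexp_le : ∀ N : ℕ, Real.exp (-ρ*T/N) ≤ 1 := by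
    intro N
    rw [Real.exp_le_one_iff]
    apply div_nonpos_of_nonpos_of_nonneg
    · nlinarith
    · positivity
  have hrq : ∀ N : ℕ, |Real.exp (-ρ*T/N)*(κ-1)/κ| ≤ |(κ-1)/κ| := by
    intro N
    rw [mul_div_assoc, abs_mul, Real.abs_exp]
    exact mul_le_of_le_one_left (abs_nonneg _) (hexp_le N)
  have hrne : ∀ N : ℕ, Real.exp (-ρ*T/N)*(κ-1)/κ ≠ 1 := by
    intro N h
    have := hrq N
    rw [h] at this
    simp at this
    linarith
  -- reindexing lemma
  have hsum : ∀ (N : ℕ) (x : ℝ),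
      ∑ i ∈ Finset.Icc 1 (N+1), x^(N+1-i) = ∑ j ∈ Finset.range (N+1), x^j := by
    intro N x
    rw [show Finset.Icc 1 (N+1) = Finset.Ico 1 (N+2) from (Finset.Ico_add_one_right_eq_Icc ..).symm,
      Finset.sum_Ico_eq_sum_range, ← Finset.sum_range_reflect]
    apply Finset.sum_congr rfl
    intro i hi
    congr 1
    simp only [Finset.mem_range] at hi
    omega
  -- closed form
  have key : ∀ N : ℕ,
      (∑ i ∈ Finset.Icc 1 (N+1),
        ((1 - Real.exp (-ρ*T/N))*κ
            + Real.exp (-ρ*T/N)*(Real.exp (-ρ*T/N)*(κ-1)/κ)^(N+1-i))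
          / (κ*(κ - Real.exp (-ρ*T/N)*(κ-1))))
      = (((N:ℝ)+1)*(1 - Real.exp (-ρ*T/N))*κ
          + Real.exp (-ρ*T/N) *
            (((Real.exp (-ρ*T/N)*(κ-1)/κ)^(N+1) - 1)/((Real.exp (-ρ*T/N)*(κ-1)/κ) - 1)))
        / (κ*(κ - Real.exp (-ρ*T/N)*(κ-1))) := by
    intro N
    rw [← Finset.sum_div]
    congr 1
    rw [Finset.sum_add_distrib, Finset.sum_const, ← Finset.mul_sum, hsum, geom_sum_eq (hrne N)]
    simp only [Nat.card_Icc, Nat.add_sub_cancel, nsmul_eq_mul]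
    push_cast
    ring
  -- limits
  have h0 : Tendsto (fun N : ℕ => -ρ*T/(N:ℝ)) atTop (nhds 0) :=
    Tendsto.div_atTop tendsto_const_nhds tendsto_natCast_atTop_atTop
  have hα1 : Tendsto (fun N : ℕ => Real.exp (-ρ*T/N)) atTop (nhds 1) := by
    have := (Real.continuous_exp.tendsto 0).comp h0
    simpa [Function.comp_def] using this
  have hrlim : Tendsto (fun N : ℕ => Real.exp (-ρ*T/N)*(κ-1)/κ) atTop (nhds ((κ-1)/κ)) := by
    have := (hα1.mul_const (κ-1)).div_const κ
    simpa using this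
  have hpow : Tendsto (fun N : ℕ => (Real.exp (-ρ*T/N)*(κ-1)/κ)^(N+1)) atTop (nhds 0) := by
    have hb : Tendsto (fun N : ℕ => |(κ-1)/κ|^(N+1)) atTop (nhds 0) :=
      (tendsto_pow_atTop_nhds_zero_of_lt_one (abs_nonneg _) hq1).comp
        (tendsto_add_atTop_nat 1)
    refine squeeze_zero_norm (fun N => ?_) hb
    rw [Real.norm_eq_abs, abs_pow]
    exact pow_le_pow_left₀ (abs_nonneg _) (hrq N) _
  -- slope
  have hslope : Tendsto (fun h : ℝ => (Real.exp h - 1)/h) (nhdsWithin 0 {(0:ℝ)}ᶜ) (nhds 1) := by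
    have h := Real.hasDerivAt_exp 0
    rw [hasDerivAt_iff_tendsto_slope] at h
    simp only [slope_fun_def, vsub_eq_sub, smul_eq_mul, Real.exp_zero, sub_zero] at h
    refine h.congr (fun x => ?_)
    rw [div_eq_inv_mul]
  have hh : Tendsto (fun N : ℕ => -ρ*T/(N:ℝ)) atTop (nhdsWithin 0 {(0:ℝ)}ᶜ) := by
    rw [tendsto_nhdsWithin_iff]
    refine ⟨h0, ?_⟩
    filter_upwards [eventually_ge_atTop 1] with N hN
    have hN0 : (N:ℝ) ≠ 0 := Nat.cast_ne_zero.mpr (by omega)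
    simp only [Set.mem_compl_iff, Set.mem_singleton_iff]
    exact div_ne_zero (by nlinarith) hN0
  have hcomp : Tendsto (fun N : ℕ => (Real.exp (-ρ*T/N) - 1)/(-ρ*T/N)) atTop (nhds 1) :=
    hslope.comp hh
  have hfrac : Tendsto (fun N : ℕ => ((N:ℝ)+1)/N) atTop (nhds 1) := by
    have h1 : Tendsto (fun N : ℕ => 1 + (N:ℝ)⁻¹) atTop (nhds (1+0)) :=
      tendsto_const_nhds.add (tendsto_inv_atTop_zero.comp tendsto_natCast_atTop_atTop)
    rw [add_zero] at h1
    apply h1.congr'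
    filter_upwards [eventually_ge_atTop 1] with N hN
    have hN0 : (N:ℝ) ≠ 0 := Nat.cast_ne_zero.mpr (by omega)
    field_simp
  have hN1 : Tendsto (fun N : ℕ => ((N:ℝ)+1)*(1 - Real.exp (-ρ*T/N))) atTop (nhds (ρ*T)) := by
    have hmul : Tendsto
        (fun N : ℕ => (Real.exp (-ρ*T/N) - 1)/(-ρ*T/N) * (ρ*T) * (((N:ℝ)+1)/N))
        atTop (nhds (1 * (ρ*T) * 1)) := (hcomp.mul_const (ρ*T)).mul hfrac
    rw [one_mul, mul_one] at hmul
    apply hmul.congr'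
    filter_upwards [eventually_ge_atTop 1] with N hN
    have hN0 : (N:ℝ) ≠ 0 := Nat.cast_ne_zero.mpr (by omega)
    have hρT : ρ*T ≠ 0 := by positivity
    field_simp
    ring
  -- combine
  have hq1ne : (κ-1)/κ - 1 ≠ 0 := by
    intro h
    have : (κ-1)/κ = 1 := by linarith
    rw [this] at hq1
    simp at hq1
  have hnum1 : Tendsto (fun N : ℕ => ((N:ℝ)+1)*(1 - Real.exp (-ρ*T/N))*κ) atTop
      (nhds (ρ*T*κ)) := hN1.mul_const κ
  have hnum2 : Tendsto (fun N : ℕ => Real.exp (-ρ*T/N) *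
      (((Real.exp (-ρ*T/N)*(κ-1)/κ)^(N+1) - 1)/((Real.exp (-ρ*T/N)*(κ-1)/κ) - 1)))
      atTop (nhds (1 * ((0-1)/((κ-1)/κ - 1)))) :=
    hα1.mul ((hpow.sub_const 1).div (hrlim.sub_const 1) hq1ne)
  have hden : Tendsto (fun N : ℕ => κ*(κ - Real.exp (-ρ*T/N)*(κ-1))) atTop
      (nhds (κ*(κ - 1*(κ-1)))) :=
    tendsto_const_nhds.mul (tendsto_const_nhds.sub (hα1.mul_const (κ-1)))
  have hdenne : κ*(κ - 1*(κ-1)) ≠ 0 := by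
    intro h
    rw [one_mul] at h
    have : κ * 1 = 0 := by rw [← h]; ring_nf
    simp [hκ0'] at this
  have hG := (hnum1.add hnum2).div hden hdenne
  have hval : (ρ*T*κ + 1 * ((0-1)/((κ-1)/κ - 1)))/(κ*(κ - 1*(κ-1))) = ρ*T+1 := by
    field_simp
    ring
  rw [hval] at hG
  exact hG.congr (fun N => (key N).symm)
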